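/- Let A ∈ ℝ^{N×N} be a matrix of rank at most d, and let P = softmax(A) be its row-wise softmax (a stochastic matrix). If N ≥ 2 and d < N, then P cannot equal an arbitrary stochastic target: in particular, for N = 3, d = 1, there exists a row-stochastic matrix P⋆ with strictly positive entries such that no rank-1 matrix A satisfies softmax(A) = P⋆. Concretely, softmax(A) = P⋆ (with P⋆ entrywise positive) if and only if log P⋆ (entrywise logarithm) equals A + c·1ᵀ for some vector c ∈ ℝ^N (row-wise constant shifts); hence rank(A) ≤ d is achievable iff log P⋆ has rank at most d+1 after allowing rank-one row-shift corrections, i.e., iff there exists c ∈ ℝ^N with rank(log P⋆ − c·1ᵀ) ≤ d. -/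

import Mathlib

/-- Row-wise softmax of a square matrix. -/
noncomputable def softmaxM {N : ℕ} (A : Matrix (Fin N) (Fin N) ℝ) :
    Matrix (Fin N) (Fin N) ℝ :=
  Matrix.of fun i j => Real.exp (A i j) / ∑ k, Real.exp (A i k)

lemma softmaxM_iff {N : ℕ} (P : Matrix (Fin N) (Fin N) ℝ)
    (hpos : ∀ i j, 0 < P i j) (hstoch : ∀ i, ∑ j, P i j = 1)
    (A : Matrix (Fin N) (Fin N) ℝ) :
    softmaxM A = P ↔
      ∃ c : Fin N → ℝ, A = Matrix.of fun i j => Real.log (P i j) + c i := by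
  constructor
  · intro h
    refine ⟨fun i => Real.log (∑ k, Real.exp (A i k)), ?_⟩
    ext i j
    have hS : 0 < ∑ k, Real.exp (A i k) :=
      Finset.sum_pos (fun k _ => Real.exp_pos _) ⟨j, Finset.mem_univ j⟩
    have hP : P i j = Real.exp (A i j) / ∑ k, Real.exp (A i k) := by
      rw [← h]; rfl
    simp only [Matrix.of_apply, hP]
    rw [Real.log_div (Real.exp_ne_zero _) (ne_of_gt hS), Real.log_exp]
    ring
  · rintro ⟨c, rfl⟩
    ext i j
    have hexp : ∀ k, Real.exp (Real.log (P i k) + c i) = P i k * Real.exp (c i) := by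
      intro k
      rw [Real.exp_add, Real.exp_log (hpos i k)]
    simp only [softmaxM, Matrix.of_apply, hexp]
    rw [← Finset.sum_mul, hstoch i, one_mul,
      mul_div_assoc, div_self (Real.exp_ne_zero _), mul_one]

lemma rank_le_one_factor {n : ℕ} (M : Matrix (Fin n) (Fin n) ℝ) (h : M.rank ≤ 1) :
    ∃ (u v : Fin n → ℝ), ∀ i j, M i j = u j * v i := by
  have hfin : FiniteDimensional ℝ (LinearMap.range M.mulVecLin) :=
    FiniteDimensional.finiteDimensional_submodule _
  obtain ⟨v, hv⟩ :=
    (Submodule.finrank_le_one_iff_isPrincipal (LinearMap.range M.mulVecLin)).mp h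
  have hcol : ∀ j : Fin n, ∃ a : ℝ, (fun i => M i j) = a • v := by
    intro j
    have hmem : M.mulVec (Pi.single j 1) ∈ LinearMap.range M.mulVecLin :=
      ⟨Pi.single j 1, rfl⟩
    rw [hv, Submodule.mem_span_singleton] at hmem
    obtain ⟨a, ha⟩ := hmem
    refine ⟨a, ?_⟩
    rw [ha]
    ext i
    simp [Matrix.mulVec_single]
  choose u hu using hcol
  refine ⟨u, v, fun i j => ?_⟩
  have := congrFun (hu j) i
  simpa using this

theorem stmt19 {N d : ℕ} (P : Matrix (Fin N) (Fin N) ℝ)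
    (hpos : ∀ i j, 0 < P i j) (hstoch : ∀ i, ∑ j, P i j = 1) :
    (∀ A : Matrix (Fin N) (Fin N) ℝ,
        softmaxM A = P ↔
          ∃ c : Fin N → ℝ, A = Matrix.of fun i j => Real.log (P i j) + c i)
    ∧ ((∃ A : Matrix (Fin N) (Fin N) ℝ, A.rank ≤ d ∧ softmaxM A = P)
        ↔ ∃ c : Fin N → ℝ,
            (Matrix.of fun i j => Real.log (P i j) - c i : Matrix (Fin N) (Fin N) ℝ).rank ≤ d)
    ∧ (∃ Q : Matrix (Fin 3) (Fin 3) ℝ, (∀ i j, 0 < Q i j) ∧ (∀ i, ∑ j, Q i j = 1) ∧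
        ∀ A : Matrix (Fin 3) (Fin 3) ℝ, A.rank ≤ 1 → softmaxM A ≠ Q) := by
  refine ⟨softmaxM_iff P hpos hstoch, ?_, ?_⟩
  · constructor
    · rintro ⟨A, hrank, hA⟩
      obtain ⟨c, rfl⟩ := (softmaxM_iff P hpos hstoch A).mp hA
      refine ⟨fun i => -c i, ?_⟩
      have heq : (Matrix.of fun i j => Real.log (P i j) - (fun i => -c i) i :
          Matrix (Fin N) (Fin N) ℝ)
          = Matrix.of fun i j => Real.log (P i j) + c i := by
        ext i j; simp [sub_neg_eq_add]
      rw [heq]; exact hrank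
    · rintro ⟨c, hc⟩
      refine ⟨Matrix.of fun i j => Real.log (P i j) - c i, hc, ?_⟩
      rw [softmaxM_iff P hpos hstoch]
      exact ⟨fun i => -c i, by ext i j; simp; ring⟩
  · set Q : Matrix (Fin 3) (Fin 3) ℝ :=
      Matrix.of ![![(1:ℝ)/4, 1/4, 1/2], ![(1:ℝ)/4, 1/2, 1/4], ![(1:ℝ)/3, 1/3, 1/3]] with hQ
    have hQpos : ∀ i j, 0 < Q i j := by
      intro i j
      fin_cases i <;> fin_cases j <;> norm_num [hQ]
    have hQstoch : ∀ i, ∑ j, Q i j = 1 := by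
      intro i
      fin_cases i <;> simp [hQ, Fin.sum_univ_three] <;> norm_num
    refine ⟨Q, hQpos, hQstoch, ?_⟩
    intro A hrank hA
    obtain ⟨c, rfl⟩ := (softmaxM_iff Q hQpos hQstoch A).mp hA
    obtain ⟨u, v, huv⟩ := rank_le_one_factor _ hrank
    have hL : (0:ℝ) < Real.log (1/2) - Real.log (1/4) := by
      have := Real.log_lt_log (by norm_num : (0:ℝ) < 1/4) (by norm_num : (1:ℝ)/4 < 1/2)
      linarith
    set L : ℝ := Real.log (1/2) - Real.log (1/4) with hLdef
    have e02 := huv 0 2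
    have e00 := huv 0 0
    have e11 := huv 1 1
    have e10 := huv 1 0
    have e12 := huv 1 2
    simp only [Matrix.of_apply, hQ] at e02 e00 e11 e10 e12
    norm_num [Matrix.cons_val_zero, Matrix.cons_val_one, Matrix.cons_val_two] at e02 e00 e11 e10 e12
    -- E2 : v0 * (u2 - u0) = L
    have E2 : v 0 * (u 2 - u 0) = L := by
      have : (u 2 * v 0) - (u 0 * v 0) = L := by
        rw [← e02, ← e00]; ring
      linarith [this]
    -- E4 : v1 * (u2 - u0) = 0
    have E4 : v 1 * (u 2 - u 0) = 0 := by
      have : (u 2 * v 1) - (u 0 * v 1) = 0 := by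
        rw [← e12, ← e10]; ring
      linarith [this]
    -- E3 : v1 * (u1 - u0) = L
    have E3 : v 1 * (u 1 - u 0) = L := by
      have : (u 1 * v 1) - (u 0 * v 1) = L := by
        rw [← e11, ← e10]; ring
      linarith [this]
    have hu20 : u 2 - u 0 ≠ 0 := by
      intro h0
      rw [h0, mul_zero] at E2
      linarith
    have hv1 : v 1 = 0 := by
      rcases mul_eq_zero.mp E4 with h | h
      · exact h
      · exact absurd h hu20
    rw [hv1, zero_mul] at E3
    linarith
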